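/- Let f : ℝⁿ → ℝ and G : ℝⁿ → S^m be twice continuously differentiable. Suppose SOSC-NLP is satisfied at a KKT triple (x,Y,Λ) ∈ ℝⁿ × S^m × S^m of (P2). Then (x,Λ) is a KKT pair of (P1) which satisfies strict complementarity: rank G(x) + rank Λ = m. -/

import Mathlib

open Matrix

noncomputable section

def jmul {m : ℕ} (A B : Matrix (Fin m) (Fin m) ℝ) : Matrix (Fin m) (Fin m) ℝ :=
  (1 / 2 : ℝ) • (A * B + B * A)

def minner {m : ℕ} (A B : Matrix (Fin m) (Fin m) ℝ) : ℝ :=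
  (A * B).trace

def memPhi {m : ℕ} (Λ Y : Matrix (Fin m) (Fin m) ℝ) : Prop :=
  ∀ W : Matrix (Fin m) (Fin m) ℝ, W.IsSymm → W ≠ 0 → jmul Y W = 0 →
    0 < minner (jmul W W) Λ

def pderivG {n m : ℕ} (G : (Fin n → ℝ) → Matrix (Fin m) (Fin m) ℝ)
    (x : Fin n → ℝ) (k : Fin n) : Matrix (Fin m) (Fin m) ℝ :=
  Matrix.of fun i j => fderiv ℝ (fun y => G y i j) x (Pi.single k 1)

def dirDerivG {n m : ℕ} (G : (Fin n → ℝ) → Matrix (Fin m) (Fin m) ℝ)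
    (x v : Fin n → ℝ) : Matrix (Fin m) (Fin m) ℝ :=
  ∑ k, v k • pderivG G x k

def adjDG {n m : ℕ} (G : (Fin n → ℝ) → Matrix (Fin m) (Fin m) ℝ)
    (x : Fin n → ℝ) (W : Matrix (Fin m) (Fin m) ℝ) : Fin n → ℝ :=
  fun k => minner (pderivG G x k) W

def gradf {n : ℕ} (f : (Fin n → ℝ) → ℝ) (x : Fin n → ℝ) : Fin n → ℝ :=
  fun k => fderiv ℝ f x (Pi.single k 1)

def KKT1 {n m : ℕ} (f : (Fin n → ℝ) → ℝ) (G : (Fin n → ℝ) → Matrix (Fin m) (Fin m) ℝ)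
    (x : Fin n → ℝ) (Λ : Matrix (Fin m) (Fin m) ℝ) : Prop :=
  gradf f x = adjDG G x Λ ∧ Λ.PosSemidef ∧ (G x).PosSemidef ∧ jmul Λ (G x) = 0

def KKT2 {n m : ℕ} (f : (Fin n → ℝ) → ℝ) (G : (Fin n → ℝ) → Matrix (Fin m) (Fin m) ℝ)
    (x : Fin n → ℝ) (Y Λ : Matrix (Fin m) (Fin m) ℝ) : Prop :=
  gradf f x = adjDG G x Λ ∧ jmul Λ Y = 0 ∧ G x = jmul Y Y

def hessQ {n m : ℕ} (f : (Fin n → ℝ) → ℝ) (G : (Fin n → ℝ) → Matrix (Fin m) (Fin m) ℝ)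
    (Λ : Matrix (Fin m) (Fin m) ℝ) (x v : Fin n → ℝ) : ℝ :=
  iteratedFDeriv ℝ 2 (fun y => f y - minner (G y) Λ) x ![v, v]

def SOSCNLP {n m : ℕ} (f : (Fin n → ℝ) → ℝ) (G : (Fin n → ℝ) → Matrix (Fin m) (Fin m) ℝ)
    (x : Fin n → ℝ) (Y Λ : Matrix (Fin m) (Fin m) ℝ) : Prop :=
  ∀ (v : Fin n → ℝ) (W : Matrix (Fin m) (Fin m) ℝ), W.IsSymm →
    ¬(v = 0 ∧ W = 0) → dirDerivG G x v = (2 : ℝ) • jmul Y W →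
    0 < hessQ f G Λ x v + 2 * minner (jmul W W) Λ

def SONCNLP {n m : ℕ} (f : (Fin n → ℝ) → ℝ) (G : (Fin n → ℝ) → Matrix (Fin m) (Fin m) ℝ)
    (x : Fin n → ℝ) (Y Λ : Matrix (Fin m) (Fin m) ℝ) : Prop :=
  ∀ (v : Fin n → ℝ) (W : Matrix (Fin m) (Fin m) ℝ), W.IsSymm →
    dirDerivG G x v = (2 : ℝ) • jmul Y W →
    0 ≤ hessQ f G Λ x v + 2 * minner (jmul W W) Λ

def LICQ {n m : ℕ} (G : (Fin n → ℝ) → Matrix (Fin m) (Fin m) ℝ)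
    (x : Fin n → ℝ) (Y : Matrix (Fin m) (Fin m) ℝ) : Prop :=
  ∀ W : Matrix (Fin m) (Fin m) ℝ, W.IsSymm → jmul Y W = 0 → adjDG G x W = 0 → W = 0

def Nondeg {n m : ℕ} (G : (Fin n → ℝ) → Matrix (Fin m) (Fin m) ℝ)
    (x : Fin n → ℝ) : Prop :=
  ∀ W : Matrix (Fin m) (Fin m) ℝ, W.IsSymm → G x * W = 0 → adjDG G x W = 0 → W = 0

def CritCone {n m : ℕ} (f : (Fin n → ℝ) → ℝ) (G : (Fin n → ℝ) → Matrix (Fin m) (Fin m) ℝ)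
    (x : Fin n → ℝ) : Set (Fin n → ℝ) :=
  {d | (∀ u : Fin m → ℝ, G x *ᵥ u = 0 → 0 ≤ u ⬝ᵥ (dirDerivG G x d *ᵥ u)) ∧
    gradf f x ⬝ᵥ d = 0}

def IsMPInv {m : ℕ} (A P : Matrix (Fin m) (Fin m) ℝ) : Prop :=
  A * P * A = A ∧ P * A * P = P ∧ (A * P)ᵀ = A * P ∧ (P * A)ᵀ = P * A

def Hmat {n m : ℕ} (G : (Fin n → ℝ) → Matrix (Fin m) (Fin m) ℝ)
    (x : Fin n → ℝ) (Λ P : Matrix (Fin m) (Fin m) ℝ) : Matrix (Fin n) (Fin n) ℝ :=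
  Matrix.of fun i j => 2 * (pderivG G x i * P * pderivG G x j * Λ).trace

lemma trace_vecMulVec_mul {m : ℕ} (u v : Fin m → ℝ) (M : Matrix (Fin m) (Fin m) ℝ) :
    (vecMulVec u v * M).trace = v ⬝ᵥ (M *ᵥ u) := by
  simp only [Matrix.trace, Matrix.diag, Matrix.mul_apply, vecMulVec_apply, dotProduct,
    Matrix.mulVec, Finset.mul_sum]
  rw [Finset.sum_comm]
  apply Finset.sum_congr rfl; intro k _
  apply Finset.sum_congr rfl; intro i _
  ring

lemma vecMulVec_mul_vecMulVec {m : ℕ} (u v u' v' : Fin m → ℝ) :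
    vecMulVec u v * vecMulVec u' v' = (v ⬝ᵥ u') • vecMulVec u v' := by
  ext i j
  simp only [Matrix.mul_apply, vecMulVec_apply, Matrix.smul_apply, dotProduct, smul_eq_mul,
    Finset.sum_mul]
  apply Finset.sum_congr rfl; intro k _; ring

lemma vecMulVec_isSymm {m : ℕ} (u : Fin m → ℝ) : (vecMulVec u u).IsSymm := by
  ext i j; simp [Matrix.transpose_apply, vecMulVec_apply, mul_comm]

lemma diag_analysis {m : ℕ} (d : Fin m → ℝ) (L : Matrix (Fin m) (Fin m) ℝ) (hL : L.IsSymm)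
    (hanti : diagonal d * L + L * diagonal d = 0)
    (hpos : ∀ W : Matrix (Fin m) (Fin m) ℝ, W.IsSymm → W ≠ 0 →
      diagonal d * W + W * diagonal d = 0 → 0 < (W * W * L).trace) :
    L * diagonal d = 0 ∧ L.PosSemidef ∧ (diagonal d * diagonal d + L).PosDef := by
  have h1 : ∀ i j, (d i + d j) * L i j = 0 := by
    intro i j
    have := congrFun (congrFun hanti i) j
    simp only [Matrix.add_apply, diagonal_mul, mul_diagonal, Matrix.zero_apply] at this
    linarith [this]
  have hdiag0 : ∀ i, d i ≠ 0 → L i i = 0 := by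
    intro i hdi
    have := h1 i i
    rcases mul_eq_zero.mp this with h | h
    · exact absurd (by linarith) hdi
    · exact h
  -- step 2 : no opposite nonzero pair
  have hno : ∀ i j, d i + d j = 0 → d i = 0 := by
    intro i j hsum
    by_contra hdi
    have hij : i ≠ j := by rintro rfl; apply hdi; linarith
    set W : Matrix (Fin m) (Fin m) ℝ :=
      vecMulVec (Pi.single i 1) (Pi.single j 1) + vecMulVec (Pi.single j 1) (Pi.single i 1) with hW
    have hWs : W.IsSymm := by
      rw [Matrix.IsSymm, hW, transpose_add]
      have : ∀ a b : Fin m, (vecMulVec (Pi.single a (1:ℝ)) (Pi.single b 1))ᵀ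
          = vecMulVec (Pi.single b 1) (Pi.single a 1) := by
        intro a b; ext p q; simp [Matrix.transpose_apply, vecMulVec_apply, mul_comm]
      rw [this, this, add_comm]
    have hWne : W ≠ 0 := by
      intro h0
      have := congrFun (congrFun h0 i) j
      simp [hW, vecMulVec_apply, Pi.single_apply, hij] at this
    have hWa : diagonal d * W + W * diagonal d = 0 := by
      ext a b
      simp only [Matrix.add_apply, diagonal_mul, mul_diagonal, hW, vecMulVec_apply,
        Pi.single_apply, Matrix.zero_apply]
      by_cases hai : a = i <;> by_cases hbj : b = j <;> by_cases haj : a = j <;>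
        by_cases hbi : b = i <;> subst_vars <;> simp_all <;> ring_nf <;> try linarith
    have htr := hpos W hWs hWne hWa
    have hdj0 : d j ≠ 0 := fun h => hdi (by linarith)
    have hcomp : (W * W * L).trace = 0 := by
      have e1 : W * W = vecMulVec (Pi.single i 1) (Pi.single i (1:ℝ))
          + vecMulVec (Pi.single j 1) (Pi.single j 1) := by
        rw [hW]
        simp only [add_mul, mul_add, vecMulVec_mul_vecMulVec, single_dotProduct,
          Pi.single_apply, hij, hij.symm]
        simp [hij, hij.symm]
        abel
      rw [e1, add_mul, trace_add, trace_vecMulVec_mul, trace_vecMulVec_mul]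
      simp [mulVec_single, single_dotProduct, hdiag0 i hdi, hdiag0 j hdj0]
    rw [hcomp] at htr; exact lt_irrefl _ htr
  -- step 3 : support
  have hsupp : ∀ i j, L i j ≠ 0 → d i = 0 ∧ d j = 0 := by
    intro i j hLij
    have hsum : d i + d j = 0 := by
      rcases mul_eq_zero.mp (h1 i j) with h | h
      · exact h
      · exact absurd h hLij
    have hdi := hno i j hsum
    exact ⟨hdi, by linarith⟩
  -- step 4
  have hLd : L * diagonal d = 0 := by
    ext i j
    simp only [mul_diagonal, Matrix.zero_apply]
    by_cases h : L i j = 0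
    · rw [h, zero_mul]
    · rw [(hsupp i j h).2, mul_zero]
  -- step 5 : positive on kernel-of-d support
  have hkey : ∀ u : Fin m → ℝ, u ≠ 0 → (∀ i, d i ≠ 0 → u i = 0) → 0 < u ⬝ᵥ (L *ᵥ u) := by
    intro u hu hud
    set W := vecMulVec u u with hW
    have hWne : W ≠ 0 := by
      intro h0
      apply hu
      funext i
      have := congrFun (congrFun h0 i) i
      simp only [hW, vecMulVec_apply, Matrix.zero_apply] at this
      exact (mul_self_eq_zero).mp this
    have hWa : diagonal d * W + W * diagonal d = 0 := by
      ext a b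
      simp only [Matrix.add_apply, diagonal_mul, mul_diagonal, hW, vecMulVec_apply,
        Matrix.zero_apply]
      have hda : ∀ c, d c * u c = 0 := by
        intro c; by_cases h : d c = 0
        · rw [h, zero_mul]
        · rw [hud c h, mul_zero]
      rw [show d a * (u a * u b) = (d a * u a) * u b by ring, hda a,
        show u a * u b * d b = u a * (d b * u b) by ring, hda b]
      ring
    have htr := hpos W (vecMulVec_isSymm u) hWne hWa
    rw [hW, vecMulVec_mul_vecMulVec, smul_mul_assoc, trace_smul, trace_vecMulVec_mul,
      smul_eq_mul] at htr
    have hu2 : 0 < u ⬝ᵥ u := by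
      have hnn : 0 ≤ u ⬝ᵥ u := Finset.sum_nonneg fun i _ => mul_self_nonneg _
      rcases lt_or_eq_of_le hnn with h | h
      · exact h
      · exact absurd (dotProduct_self_eq_zero.mp h.symm) hu
    nlinarith [htr, hu2]
  -- step 6 : PosSemidef
  have hLH : L.IsHermitian := by
    rw [Matrix.IsHermitian, conjTranspose_eq_transpose_of_trivial]; exact hL
  have hquad : ∀ x : Fin m → ℝ, x ⬝ᵥ (L *ᵥ x)
      = (fun i => if d i = 0 then x i else 0) ⬝ᵥ (L *ᵥ fun i => if d i = 0 then x i else 0) := by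
    intro x
    simp only [dotProduct, Matrix.mulVec, Finset.mul_sum]
    apply Finset.sum_congr rfl; intro i _
    apply Finset.sum_congr rfl; intro j _
    by_cases h : L i j = 0
    · simp [h]
    · obtain ⟨hdi, hdj⟩ := hsupp i j h
      simp [hdi, hdj]
  have hLpsd : L.PosSemidef := by
    refine posSemidef_iff_dotProduct_mulVec.mpr ⟨hLH, fun x => ?_⟩
    rw [show star x = x from rfl, hquad x]
    set u : Fin m → ℝ := fun i => if d i = 0 then x i else 0 with hu
    by_cases h : u = 0
    · rw [h]; simp
    · exact le_of_lt (hkey u h (fun i hdi => by simp [hu, hdi]))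
  refine ⟨hLd, hLpsd, ?_⟩
  -- step 7 : PosDef
  refine posDef_iff_dotProduct_mulVec.mpr ⟨?_, ?_⟩
  · rw [Matrix.IsHermitian, conjTranspose_eq_transpose_of_trivial]
    rw [diagonal_mul_diagonal]
    rw [transpose_add, diagonal_transpose, hL]
  intro x hx
  rw [show star x = x from rfl, add_mulVec, dotProduct_add, diagonal_mul_diagonal]
  have hD : x ⬝ᵥ ((diagonal fun i => d i * d i) *ᵥ x) = ∑ i, (d i * x i) * (d i * x i) := by
    simp only [dotProduct, mulVec_diagonal]
    apply Finset.sum_congr rfl; intro i _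
    ring
  have hDnn : 0 ≤ x ⬝ᵥ ((diagonal fun i => d i * d i) *ᵥ x) := by
    rw [hD]; exact Finset.sum_nonneg fun i _ => mul_self_nonneg _
  set u : Fin m → ℝ := fun i => if d i = 0 then x i else 0 with hu
  by_cases h : u = 0
  · -- then some i has x i ≠ 0 and d i ≠ 0
    obtain ⟨i, hi⟩ := Function.ne_iff.mp hx
    have hdi : d i ≠ 0 := by
      intro hdi
      have := congrFun h i
      simp [hu, hdi] at this
      exact hi this
    have hpos' : 0 < x ⬝ᵥ ((diagonal fun i => d i * d i) *ᵥ x) := by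
      rw [hD]
      have hne : d i * x i ≠ 0 := mul_ne_zero hdi (by simpa using hi)
      exact Finset.sum_pos' (fun j _ => mul_self_nonneg _)
        ⟨i, Finset.mem_univ i, mul_self_pos.mpr hne⟩
    have hLnn : 0 ≤ x ⬝ᵥ (L *ᵥ x) := by
      rw [hquad x]
      rw [show (fun i => if d i = 0 then x i else 0) = u from rfl, h]
      simp
    linarith
  · have hLpos : 0 < x ⬝ᵥ (L *ᵥ x) := by
      rw [hquad x]
      exact hkey u h (fun i hdi => by simp [hu, hdi])
    linarith

lemma aux_sandwich {m : ℕ} (P Q A B : Matrix (Fin m) (Fin m) ℝ) (h : Q * P = 1) :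
    (P * A * Q) * (P * B * Q) = P * (A * B) * Q := by
  simp only [mul_assoc]
  rw [← mul_assoc Q P (B * Q), h, one_mul]

lemma aux_unconj {m : ℕ} (P Q A : Matrix (Fin m) (Fin m) ℝ) (h : Q * P = 1) :
    Q * (P * A * Q) * P = A := by
  have e : Q * (P * A * Q) * P = (Q * P) * A * (Q * P) := by noncomm_ring
  rw [e, h, one_mul, mul_one]

lemma aux_conj_add {m : ℕ} (P Q A B : Matrix (Fin m) (Fin m) ℝ) :
    P * A * Q + P * B * Q = P * (A + B) * Q := by
  rw [Matrix.mul_add, Matrix.add_mul]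

lemma aux_jmul_self {m : ℕ} (A : Matrix (Fin m) (Fin m) ℝ) : jmul A A = A * A := by
  rw [jmul, ← two_smul ℝ (A * A), smul_smul]
  norm_num

lemma aux_jmul_eq_zero_iff {m : ℕ} (A B : Matrix (Fin m) (Fin m) ℝ) :
    jmul A B = 0 ↔ A * B + B * A = 0 := by
  rw [jmul, smul_eq_zero]
  norm_num

lemma aux_rank_add {m : ℕ} (A B : Matrix (Fin m) (Fin m) ℝ) (hA : A.PosSemidef)
    (hAB : A * B = 0) (hPD : (A + B).PosDef) : A.rank + B.rank = m := by
  have hdisj : LinearMap.range A.mulVecLin ⊓ LinearMap.range B.mulVecLin = ⊥ := by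
    rw [Submodule.eq_bot_iff]
    rintro w ⟨⟨u, hu⟩, ⟨v, hv⟩⟩
    have hAs : Aᵀ = A := by rw [← conjTranspose_eq_transpose_of_trivial]; exact hA.1
    have : w ⬝ᵥ w = 0 := by
      rw [show w ⬝ᵥ w = A.mulVecLin u ⬝ᵥ B.mulVecLin v by rw [hu, hv]]
      simp only [mulVecLin_apply] at *
      calc (A *ᵥ u) ⬝ᵥ (B *ᵥ v) = (B *ᵥ v) ⬝ᵥ (A *ᵥ u) := dotProduct_comm _ _
        _ = ((B *ᵥ v) ᵥ* A) ⬝ᵥ u := dotProduct_mulVec _ _ _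
        _ = (Aᵀ *ᵥ (B *ᵥ v)) ⬝ᵥ u := by rw [mulVec_transpose]
        _ = ((A * B) *ᵥ v) ⬝ᵥ u := by rw [hAs, mulVec_mulVec]
        _ = 0 := by rw [hAB]; simp
    exact dotProduct_self_eq_zero.mp this
  have hsup : LinearMap.range A.mulVecLin ⊔ LinearMap.range B.mulVecLin = ⊤ := by
    rw [Submodule.eq_top_iff']
    intro w
    have hunit : IsUnit (A + B).det := (Matrix.isUnit_iff_isUnit_det _).mp hPD.isUnit
    have hw : (A + B) *ᵥ ((A + B)⁻¹ *ᵥ w) = w := by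
      rw [mulVec_mulVec, mul_nonsing_inv _ hunit, one_mulVec]
    have : w = A *ᵥ ((A + B)⁻¹ *ᵥ w) + B *ᵥ ((A + B)⁻¹ *ᵥ w) := by
      rw [← add_mulVec, hw]
    rw [this]
    exact Submodule.add_mem_sup (LinearMap.mem_range_self _ _) (LinearMap.mem_range_self _ _)
  have hfin := Submodule.finrank_sup_add_finrank_inf_eq (LinearMap.range A.mulVecLin)
    (LinearMap.range B.mulVecLin)
  rw [hdisj, hsup] at hfin
  simp only [finrank_top, finrank_bot, add_zero] at hfin
  rw [Matrix.rank, Matrix.rank, ← hfin, Module.finrank_fin_fun]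

theorem stmt8 {n m : ℕ} (f : (Fin n → ℝ) → ℝ) (G : (Fin n → ℝ) → Matrix (Fin m) (Fin m) ℝ)
    (hf : ContDiff ℝ 2 f) (hG : ∀ i j, ContDiff ℝ 2 fun y => G y i j)
    (x : Fin n → ℝ) (Y Λ : Matrix (Fin m) (Fin m) ℝ)
    (hY : Y.IsSymm) (hΛ : Λ.IsSymm) (hKKT : KKT2 f G x Y Λ)
    (hsosc : SOSCNLP f G x Y Λ) :
    KKT1 f G x Λ ∧ (G x).rank + Λ.rank = m := by
  obtain ⟨hgrad, hΛYj, hGYj⟩ := hKKT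
  have hΛY : Λ * Y + Y * Λ = 0 := (aux_jmul_eq_zero_iff _ _).mp hΛYj
  have hGxx : G x = Y * Y := by rw [hGYj, aux_jmul_self]
  -- derive the positivity property from SOSC with v = 0
  have hphi : ∀ V : Matrix (Fin m) (Fin m) ℝ, V.IsSymm → V ≠ 0 → jmul Y V = 0 →
      0 < ((V * V) * Λ).trace := by
    intro V hVs hVne hjm
    have h0 := hsosc 0 V hVs (fun h => hVne h.2) (by
      rw [hjm, smul_zero]
      simp [dirDerivG])
    have hhe : hessQ f G Λ x 0 = 0 :=
      (iteratedFDeriv ℝ 2 (fun y => f y - minner (G y) Λ) x).map_coord_zero (0 : Fin 2) rfl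
    rw [hhe, zero_add] at h0
    have hmm : minner (jmul V V) Λ = ((V * V) * Λ).trace := by
      rw [aux_jmul_self]; rfl
    rw [hmm] at h0
    linarith
  -- spectral decomposition of Y
  have hYH : Y.IsHermitian := by
    rw [Matrix.IsHermitian, conjTranspose_eq_transpose_of_trivial]; exact hY
  set U : Matrix (Fin m) (Fin m) ℝ := (hYH.eigenvectorUnitary : Matrix (Fin m) (Fin m) ℝ)
    with hUdef
  set d : Fin m → ℝ := hYH.eigenvalues with hd
  have hU2 : U * star U = 1 := (Matrix.mem_unitaryGroup_iff).mp (hYH.eigenvectorUnitary).2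
  have hU1 : star U * U = 1 := (Matrix.mem_unitaryGroup_iff').mp (hYH.eigenvectorUnitary).2
  have hspec : Y = U * diagonal d * star U := by
    have := hYH.spectral_theorem
    simpa using this
  set L : Matrix (Fin m) (Fin m) ℝ := star U * Λ * U with hLdef
  have hDs : diagonal d = star U * Y * U := by
    rw [hspec, aux_unconj _ _ _ hU1]
  have hΛeq : Λ = U * L * star U := by
    rw [hLdef, aux_unconj _ _ _ hU2]
  have hΛstar : star Λ = Λ := by
    rw [Matrix.star_eq_conjTranspose, conjTranspose_eq_transpose_of_trivial]; exact hΛ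
  have hLstar : star L = L := by
    rw [hLdef, Matrix.star_mul, Matrix.star_mul, star_star, hΛstar]
    simp only [mul_assoc]
  have hLsymm : L.IsSymm := by
    rw [Matrix.IsSymm, ← conjTranspose_eq_transpose_of_trivial,
      ← Matrix.star_eq_conjTranspose, hLstar]
  have hanti' : diagonal d * L + L * diagonal d = 0 := by
    rw [hDs, hLdef, aux_sandwich _ _ _ _ hU2, aux_sandwich _ _ _ _ hU2, aux_conj_add,
      show Y * Λ + Λ * Y = 0 by rw [add_comm]; exact hΛY, Matrix.mul_zero, Matrix.zero_mul]
  have hpos' : ∀ W : Matrix (Fin m) (Fin m) ℝ, W.IsSymm → W ≠ 0 →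
      diagonal d * W + W * diagonal d = 0 → 0 < (W * W * L).trace := by
    intro W hWs hWne hWa
    set V : Matrix (Fin m) (Fin m) ℝ := U * W * star U with hV
    have hWstar : star W = W := by
      rw [Matrix.star_eq_conjTranspose, conjTranspose_eq_transpose_of_trivial]; exact hWs
    have hVstar : star V = V := by
      rw [hV, Matrix.star_mul, Matrix.star_mul, star_star, hWstar]
      simp only [mul_assoc]
    have hVs : V.IsSymm := by
      rw [Matrix.IsSymm, ← conjTranspose_eq_transpose_of_trivial,
        ← Matrix.star_eq_conjTranspose, hVstar]
    have hVne : V ≠ 0 := by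
      intro h0
      apply hWne
      have := aux_unconj U (star U) W hU1
      rw [← hV] at this
      rw [← this, h0, Matrix.mul_zero, Matrix.zero_mul]
    have hjm : jmul Y V = 0 := by
      rw [aux_jmul_eq_zero_iff, hspec, hV, aux_sandwich _ _ _ _ hU1,
        aux_sandwich _ _ _ _ hU1, aux_conj_add, hWa, Matrix.mul_zero, Matrix.zero_mul]
    have hp := hphi V hVs hVne hjm
    have htr : ((V * V) * Λ).trace = (W * W * L).trace := by
      rw [hV, aux_sandwich _ _ _ _ hU1]
      rw [show U * (W * W) * star U * Λ = U * ((W * W) * (star U * Λ)) by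
        simp only [mul_assoc]]
      rw [Matrix.trace_mul_comm, hLdef]
      simp only [mul_assoc]
    rwa [htr] at hp
  obtain ⟨hLD, hLpsd, hPD'⟩ := diag_analysis d L hLsymm hanti' hpos'
  -- complementarity
  have hΛY0 : Λ * Y = 0 := by
    rw [hΛeq, hspec, aux_sandwich _ _ _ _ hU1, hLD, Matrix.mul_zero, Matrix.zero_mul]
  have hYΛ0 : Y * Λ = 0 := by
    have := hΛY
    rw [hΛY0, zero_add] at this
    exact this
  have hGΛ0 : G x * Λ = 0 := by rw [hGxx, mul_assoc, hYΛ0, Matrix.mul_zero]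
  have hΛG0 : Λ * G x = 0 := by rw [hGxx, ← mul_assoc, hΛY0, Matrix.zero_mul]
  -- PSD facts
  have hΛpsd : Λ.PosSemidef := by
    rw [hΛeq, Matrix.star_eq_conjTranspose]
    exact hLpsd.mul_mul_conjTranspose_same U
  have hGpsd : (G x).PosSemidef := by
    rw [hGxx]
    have := Matrix.posSemidef_conjTranspose_mul_self Y
    rwa [show Yᴴ = Y from hYH] at this
  refine ⟨⟨hgrad, hΛpsd, hGpsd, ?_⟩, ?_⟩
  · rw [jmul, hΛG0, hGΛ0, add_zero, smul_zero]
  -- rank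
  have hsum : G x + Λ = U * (diagonal d * diagonal d + L) * star U := by
    rw [hGxx, hspec, hΛeq, aux_sandwich _ _ _ _ hU1, aux_conj_add]
  have hPDsum : (G x + Λ).PosDef := by
    rw [hsum]
    set N : Matrix (Fin m) (Fin m) ℝ := diagonal d * diagonal d + L with hN
    have hNstar : star N = N := by
      rw [Matrix.star_eq_conjTranspose]
      exact hPD'.1
    refine posDef_iff_dotProduct_mulVec.mpr ⟨?_, ?_⟩
    · rw [Matrix.IsHermitian, ← Matrix.star_eq_conjTranspose, Matrix.star_mul,
        Matrix.star_mul, star_star, hNstar]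
      simp only [mul_assoc]
    · intro z hz
      have hw : (star U *ᵥ z) ≠ 0 := by
        intro h
        apply hz
        have hwz : U *ᵥ (star U *ᵥ z) = z := by
          rw [mulVec_mulVec, hU2, one_mulVec]
        rw [h, mulVec_zero] at hwz
        exact hwz.symm
      have hq := hPD'.dotProduct_mulVec_pos hw
      rw [show star (star U *ᵥ z) = star U *ᵥ z from rfl] at hq
      rw [show star z = z from rfl]
      calc (0:ℝ) < (star U *ᵥ z) ⬝ᵥ (N *ᵥ (star U *ᵥ z)) := hq
        _ = (z ᵥ* U) ⬝ᵥ (N *ᵥ (star U *ᵥ z)) := by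
            rw [show star U *ᵥ z = z ᵥ* U by
              rw [← mulVec_transpose, Matrix.star_eq_conjTranspose,
                conjTranspose_eq_transpose_of_trivial]]
        _ = z ⬝ᵥ (U *ᵥ (N *ᵥ (star U *ᵥ z))) := (dotProduct_mulVec _ _ _).symm
        _ = z ⬝ᵥ ((U * N * star U) *ᵥ z) := by
            rw [mulVec_mulVec, mulVec_mulVec]
  exact aux_rank_add (G x) Λ hGpsd hGΛ0 hPDsum
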